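/- Let (Ω, P) be a probability space, S a measurable space, Z : Ω → S a random element, and G a finite group of measurable bijections of S of size d (containing the identity) such that for every g ∈ G the random element g ∘ Z has the same distribution as Z. Let A : S → ℝ be measurable. Fix ε ∈ (0, 1), set r(ε) = ⌈(d + 1)ε⌉, and assume r(ε) ≤ d and (r(ε) − 1)/d ≤ ε. Let Q(ω) denote the r(ε)-th largest value (counting multiplicity) of the finite family {A(g(Z(ω))) : g ∈ G}. Then P(A(Z) > Q) ≤ ε; equivalently, the prediction region {A ≤ Q} contains the truth with probability at least 1 − ε. -/

import Mathlib

open MeasureTheory Finset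
open scoped ENNReal

/-- The `k`-th largest value (counting multiplicity) of a finite family of reals,
with default value `0` when `k` is out of range. -/
noncomputable def kthLargest {ι : Type*} [Fintype ι] (f : ι → ℝ) (k : ℕ) : ℝ :=
  ((Finset.univ.val.map f).sort (· ≤ ·)).getD (Fintype.card ι - k) 0

section Aux

/-- For a sorted list, the element at index `j` is `≤ c` iff fewer than
`l.length - j` elements exceed `c`. -/
lemma sorted_get_le_iff_countP {l : List ℝ} (hs : l.Pairwise (· ≤ ·)) {j : ℕ}
    (hj : j < l.length) (c : ℝ) :
    l.get ⟨j, hj⟩ ≤ c ↔ l.countP (fun x => decide (c < x)) < l.length - j := by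
  constructor
  · intro h
    have hsplit : l.countP (fun x => decide (c < x))
        = (l.take (j+1)).countP (fun x => decide (c < x))
          + (l.drop (j+1)).countP (fun x => decide (c < x)) := by
      conv_lhs => rw [← List.take_append_drop (j+1) l]
      rw [List.countP_append]
    have htake : (l.take (j+1)).countP (fun x => decide (c < x)) = 0 := by
      rw [List.countP_eq_zero]
      intro a ha
      obtain ⟨i, hi, rfl⟩ := List.getElem_of_mem ha
      rw [List.length_take] at hi
      rw [List.getElem_take]
      have hij : i ≤ j := Nat.lt_succ_iff.mp (lt_min_iff.mp hi).1
      have hi' : i < l.length := lt_of_le_of_lt hij hj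
      have : l.get ⟨i, hi'⟩ ≤ l.get ⟨j, hj⟩ := hs.rel_get_of_le (by exact hij)
      simp only [List.get_eq_getElem] at this
      simp only [decide_eq_true_eq, not_lt]
      exact le_trans this h
    have hdrop : (l.drop (j+1)).countP (fun x => decide (c < x)) ≤ l.length - (j+1) := by
      calc (l.drop (j+1)).countP (fun x => decide (c < x)) ≤ (l.drop (j+1)).length :=
            List.countP_le_length
        _ = l.length - (j+1) := List.length_drop
    rw [hsplit, htake, Nat.zero_add]
    calc (l.drop (j+1)).countP (fun x => decide (c < x)) ≤ l.length - (j+1) := hdrop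
      _ < l.length - j := by omega
  · intro h
    by_contra hc
    push_neg at hc
    have hall : ∀ a ∈ l.drop j, (fun x => decide (c < x)) a = true := by
      intro a ha
      obtain ⟨i, hi, rfl⟩ := List.getElem_of_mem ha
      rw [List.getElem_drop]
      rw [List.length_drop] at hi
      have hji : j ≤ j + i := Nat.le_add_right _ _
      have hj' : j + i < l.length := by omega
      have : l.get ⟨j, hj⟩ ≤ l.get ⟨j + i, hj'⟩ := hs.rel_get_of_le (by exact hji)
      simp only [List.get_eq_getElem] at this
      simp only [decide_eq_true_eq]
      exact lt_of_lt_of_le hc this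
    have hlow : (l.drop j).countP (fun x => decide (c < x)) = l.length - j := by
      rw [List.countP_eq_length.mpr hall, List.length_drop]
    have hsplit : l.countP (fun x => decide (c < x))
        = (l.take j).countP (fun x => decide (c < x))
          + (l.drop j).countP (fun x => decide (c < x)) := by
      conv_lhs => rw [← List.take_append_drop j l]
      rw [List.countP_append]
    omega

open Classical in
/-- The `k`-th largest value is `≤ c` iff fewer than `k` indices have value exceeding `c`. -/
lemma kthLargest_le_iff {ι : Type*} [Fintype ι] (f : ι → ℝ) {k : ℕ}
    (hk1 : 1 ≤ k) (hk : k ≤ Fintype.card ι) (c : ℝ) :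
    kthLargest f k ≤ c ↔ (Finset.univ.filter (fun i => c < f i)).card < k := by
  set l := ((Finset.univ.val.map f).sort (· ≤ ·)) with hl
  have hlen : l.length = Fintype.card ι := by
    rw [hl, Multiset.length_sort, Multiset.card_map]
    simp [Finset.card_univ]
  have hsorted : l.Pairwise (· ≤ ·) := Multiset.pairwise_sort _ _
  have hj : Fintype.card ι - k < l.length := by omega
  have hval : kthLargest f k = l.get ⟨Fintype.card ι - k, hj⟩ := by
    rw [kthLargest, ← hl, List.getD_eq_getElem _ _ hj, List.get_eq_getElem]
  have hcount : (Finset.univ.filter (fun i => c < f i)).card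
      = l.countP (fun x => decide (c < x)) := by
    have h1 : (Finset.univ.filter (fun i => c < f i)).card
        = Multiset.countP (fun i => c < f i) Finset.univ.val := by
      rw [Multiset.countP_eq_card_filter]
      rfl
    have h2 : Multiset.countP (fun x => c < x) (Finset.univ.val.map f)
        = Multiset.countP (fun i => c < f i) Finset.univ.val := by
      rw [Multiset.countP_map, ← Multiset.countP_eq_card_filter]
    have h3 : (Finset.univ.val.map f) = (↑l : Multiset ℝ) := (Multiset.sort_eq _ _).symm
    rw [h1, ← h2, h3, Multiset.coe_countP]
  rw [hval, hcount, sorted_get_le_iff_countP hsorted hj c, hlen,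
    Nat.sub_sub_self hk]

/-- `kthLargest` is invariant under reindexing by an equivalence. -/
lemma kthLargest_comp_equiv {ι : Type*} [Fintype ι] (f : ι → ℝ) (e : ι ≃ ι) (k : ℕ) :
    kthLargest (fun i => f (e i)) k = kthLargest f k := by
  have huniv : Finset.univ.val.map ⇑e = Finset.univ.val := by
    have := Finset.univ_map_equiv_to_embedding e
    calc Finset.univ.val.map ⇑e = (Finset.univ.map e.toEmbedding).val := by
          rw [Finset.map_val]; rfl
      _ = Finset.univ.val := by rw [this]
  have : Finset.univ.val.map (fun i => f (e i)) = Finset.univ.val.map f := by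
    calc Finset.univ.val.map (fun i => f (e i)) = (Finset.univ.val.map ⇑e).map f := by
          rw [Multiset.map_map]; rfl
      _ = Finset.univ.val.map f := by rw [huniv]
  rw [kthLargest, kthLargest, this]

open Classical in
/-- Measurability of the `k`-th largest value of finitely many measurable functions. -/
lemma measurable_kthLargest {α ι : Type*} [MeasurableSpace α] [Fintype ι]
    (f : ι → α → ℝ) (hf : ∀ i, Measurable (f i)) {k : ℕ}
    (hk1 : 1 ≤ k) (hk : k ≤ Fintype.card ι) :
    Measurable (fun a => kthLargest (fun i => f i a) k) := by
  apply measurable_of_Iic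
  intro c
  have hset : (fun a => kthLargest (fun i => f i a) k) ⁻¹' Set.Iic c
      = (fun a => (Finset.univ.filter (fun i => c < f i a)).card) ⁻¹' Set.Iio k := by
    ext a
    simp only [Set.mem_preimage, Set.mem_Iic, Set.mem_Iio]
    exact kthLargest_le_iff (fun i => f i a) hk1 hk c
  rw [hset]
  have hcard : Measurable (fun a => (Finset.univ.filter (fun i => c < f i a)).card) := by
    have : (fun a => (Finset.univ.filter (fun i => c < f i a)).card)
        = fun a => ∑ i, if c < f i a then 1 else 0 := by
      funext a; rw [Finset.card_filter]
    rw [this]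
    exact Finset.measurable_sum _ (fun i _ =>
      Measurable.ite (measurableSet_lt measurable_const (hf i))
        measurable_const measurable_const)
  exact hcard ((Set.to_countable _).measurableSet)

end Aux

/-- Theorem 3 (General Exact Validity), second conclusion: inverting the
`⌈(d+1)ε⌉`-th largest non-conformity score over the orbit of a distribution-invariant
finite group of transformations yields a prediction region with exact finite-sample
coverage at least `1 - ε`. -/
theorem general_exact_validity_coverage
    {Ω S : Type*} [MeasurableSpace Ω] [MeasurableSpace S]
    (μ : Measure Ω) [IsProbabilityMeasure μ]
    {G : Type*} [Group G] [Fintype G] [MulAction G S]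
    (d : ℕ) (hd : Fintype.card G = d)
    (hmeas : ∀ g : G, Measurable (fun s : S => g • s))
    (Z : Ω → S) (hZ : Measurable Z)
    (hinv : ∀ g : G, μ.map (fun ω => g • Z ω) = μ.map Z)
    (A : S → ℝ) (hA : Measurable A)
    (ε : ℝ) (hε : ε ∈ Set.Ioo (0 : ℝ) 1)
    (r : ℕ) (hr : r = ⌈((d : ℝ) + 1) * ε⌉₊)
    (hrd : r ≤ d) (hrε : ((r : ℝ) - 1) / d ≤ ε)
    -- `Q ω` is the `r`-th largest value of the family `g ↦ A (g • Z ω)`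
    (Q : Ω → ℝ) (hQ : ∀ ω, Q ω = kthLargest (fun g : G => A (g • Z ω)) r) :
    μ {ω | Q ω < A (Z ω)} ≤ ENNReal.ofReal ε ∧
      ENNReal.ofReal (1 - ε) ≤ μ {ω | A (Z ω) ≤ Q ω} := by
  classical
  obtain ⟨hε0, hε1⟩ := hε
  have hr1 : 1 ≤ r := by
    rw [hr, Nat.one_le_ceil_iff]
    positivity
  have hd1 : 1 ≤ d := le_trans hr1 hrd
  have hrdcard : r ≤ Fintype.card G := by omega
  set Qt : S → ℝ := fun s => kthLargest (fun g : G => A (g • s)) r with hQt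
  have hQtinv : ∀ (g : G) (s : S), Qt (g • s) = Qt s := by
    intro g s
    have heq : (fun h : G => A (h • (g • s)))
        = fun h : G => A ((Equiv.mulRight g) h • s) := by
      funext h
      simp [Equiv.mulRight, mul_smul]
    calc Qt (g • s) = kthLargest (fun h : G => A (h • (g • s))) r := rfl
      _ = kthLargest (fun h : G => A ((Equiv.mulRight g) h • s)) r := by rw [heq]
      _ = kthLargest (fun h : G => A (h • s)) r :=
          kthLargest_comp_equiv (fun h : G => A (h • s)) (Equiv.mulRight g) r
      _ = Qt s := rfl
  have hQtmeas : Measurable Qt :=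
    measurable_kthLargest (fun (g : G) (s : S) => A (g • s))
      (fun g => hA.comp (hmeas g)) hr1 hrdcard
  have hEmeas : MeasurableSet {s : S | Qt s < A s} := measurableSet_lt hQtmeas hA
  have hset : {ω | Q ω < A (Z ω)} = Z ⁻¹' {s | Qt s < A s} := by
    ext ω
    simp only [Set.mem_setOf_eq, Set.mem_preimage, hQ ω]
    exact Iff.rfl
  have hmeasg : ∀ g : G, MeasurableSet {ω | Qt (Z ω) < A (g • Z ω)} := fun g =>
    measurableSet_lt (hQtmeas.comp hZ) (hA.comp ((hmeas g).comp hZ))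
  have hkey : ∀ g : G, μ {ω | Qt (Z ω) < A (g • Z ω)} = μ (Z ⁻¹' {s | Qt s < A s}) := by
    intro g
    have hgZ : Measurable fun ω : Ω => g • Z ω := (hmeas g).comp hZ
    have h1 : μ {ω | Qt (Z ω) < A (g • Z ω)}
        = μ.map (fun ω => g • Z ω) {s | Qt s < A s} := by
      rw [Measure.map_apply hgZ hEmeas]
      congr 1
      ext ω
      simp [Set.mem_preimage, hQtinv g (Z ω)]
    rw [h1, hinv g, Measure.map_apply hZ hEmeas]
  -- pointwise counting bound
  have hcount : ∀ ω : Ω,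
      ((Finset.univ.filter (fun g : G => Qt (Z ω) < A (g • Z ω))).card) ≤ r - 1 := by
    intro ω
    have hlt := (kthLargest_le_iff (fun g : G => A (g • Z ω)) hr1 hrdcard (Qt (Z ω))).mp
      (le_of_eq rfl)
    omega
  -- sum the measures
  have hsum : (d : ℝ≥0∞) * μ (Z ⁻¹' {s | Qt s < A s}) ≤ ((r - 1 : ℕ) : ℝ≥0∞) := by
    have h1 : ∑ g : G, μ {ω | Qt (Z ω) < A (g • Z ω)}
        = (d : ℝ≥0∞) * μ (Z ⁻¹' {s | Qt s < A s}) := by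
      rw [Finset.sum_congr rfl (fun g _ => hkey g), Finset.sum_const, Finset.card_univ, hd,
        nsmul_eq_mul]
    have h2 : ∑ g : G, μ {ω | Qt (Z ω) < A (g • Z ω)}
        = ∫⁻ ω, ∑ g : G, Set.indicator {ω | Qt (Z ω) < A (g • Z ω)} (1 : Ω → ℝ≥0∞) ω ∂μ := by
      rw [lintegral_finset_sum _ (fun g _ => measurable_one.indicator (hmeasg g))]
      refine Finset.sum_congr rfl (fun g _ => ?_)
      rw [lintegral_indicator (hmeasg g)]
      simp
    have h3 : ∀ ω : Ω, ∑ g : G, Set.indicator {ω | Qt (Z ω) < A (g • Z ω)} (1 : Ω → ℝ≥0∞) ω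
        ≤ ((r - 1 : ℕ) : ℝ≥0∞) := by
      intro ω
      have : ∑ g : G, Set.indicator {ω | Qt (Z ω) < A (g • Z ω)} (1 : Ω → ℝ≥0∞) ω
          = ((Finset.univ.filter (fun g : G => Qt (Z ω) < A (g • Z ω))).card : ℝ≥0∞) := by
        rw [← Finset.sum_boole]
        refine Finset.sum_congr rfl (fun g _ => ?_)
        simp [Set.indicator_apply]
      rw [this]
      exact_mod_cast hcount ω
    calc (d : ℝ≥0∞) * μ (Z ⁻¹' {s | Qt s < A s})
        = ∫⁻ ω, ∑ g : G, Set.indicator {ω | Qt (Z ω) < A (g • Z ω)} (1 : Ω → ℝ≥0∞) ω ∂μ := by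
          rw [← h2, h1]
      _ ≤ ∫⁻ _, ((r - 1 : ℕ) : ℝ≥0∞) ∂μ := lintegral_mono (fun ω => h3 ω)
      _ = ((r - 1 : ℕ) : ℝ≥0∞) := by rw [lintegral_const, measure_univ, mul_one]
  -- conclude first bound
  have hdpos : (0 : ℝ) < d := by exact_mod_cast hd1
  have hfirst : μ {ω | Q ω < A (Z ω)} ≤ ENNReal.ofReal ε := by
    rw [hset]
    have hrb : ((r - 1 : ℕ) : ℝ≥0∞) ≤ (d : ℝ≥0∞) * ENNReal.ofReal ε := by
      have h1 : ((r : ℝ) - 1) ≤ d * ε := by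
        rw [div_le_iff₀ hdpos] at hrε
        linarith
      calc ((r - 1 : ℕ) : ℝ≥0∞) = ENNReal.ofReal ((r : ℝ) - 1) := by
            rw [← ENNReal.ofReal_natCast]
            congr 1
            rw [Nat.cast_sub hr1, Nat.cast_one]
        _ ≤ ENNReal.ofReal ((d : ℝ) * ε) := ENNReal.ofReal_le_ofReal h1
        _ = ENNReal.ofReal (d : ℝ) * ENNReal.ofReal ε := ENNReal.ofReal_mul (by positivity)
        _ = (d : ℝ≥0∞) * ENNReal.ofReal ε := by rw [ENNReal.ofReal_natCast]
    have := le_trans hsum hrb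
    have hdne : (d : ℝ≥0∞) ≠ 0 := Nat.cast_ne_zero.mpr (by omega)
    rwa [ENNReal.mul_le_mul_iff_right hdne (ENNReal.natCast_ne_top d)] at this
  refine ⟨hfirst, ?_⟩
  -- complement bound
  have hcompl : {ω | A (Z ω) ≤ Q ω} = {ω | Q ω < A (Z ω)}ᶜ := by
    ext ω
    simp [not_lt]
  rw [hcompl]
  have hunion : (1 : ℝ≥0∞) ≤ μ {ω | Q ω < A (Z ω)} + μ {ω | Q ω < A (Z ω)}ᶜ := by
    calc (1 : ℝ≥0∞) = μ Set.univ := (measure_univ).symm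
      _ = μ ({ω | Q ω < A (Z ω)} ∪ {ω | Q ω < A (Z ω)}ᶜ) := by rw [Set.union_compl_self]
      _ ≤ μ {ω | Q ω < A (Z ω)} + μ {ω | Q ω < A (Z ω)}ᶜ := measure_union_le _ _
  have h1 : ENNReal.ofReal (1 - ε) + ENNReal.ofReal ε = 1 := by
    rw [← ENNReal.ofReal_add (by linarith) (le_of_lt hε0)]
    norm_num
  have h2 : ENNReal.ofReal (1 - ε) + ENNReal.ofReal ε
      ≤ μ {ω | Q ω < A (Z ω)}ᶜ + ENNReal.ofReal ε := by
    rw [h1]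
    calc (1 : ℝ≥0∞) ≤ μ {ω | Q ω < A (Z ω)} + μ {ω | Q ω < A (Z ω)}ᶜ := hunion
      _ ≤ ENNReal.ofReal ε + μ {ω | Q ω < A (Z ω)}ᶜ := add_le_add_left hfirst _
      _ = μ {ω | Q ω < A (Z ω)}ᶜ + ENNReal.ofReal ε := add_comm _ _
  exact (ENNReal.add_le_add_iff_right ENNReal.ofReal_ne_top).mp h2
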